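/- Let f : ℝ² → ℝ be monotone along every line and not constant. If ℓ₁ = w + ℝ·v and ℓ₂ = w' + ℝ·v' are two lines on which f is constant, then v and v' are parallel, i.e., there exists μ ∈ ℝ with v = μ·v'. -/

import Mathlib

/-- Lemma 3: for a nonconstant function monotone along every line,
all constant lines are parallel. -/
theorem stmt3 (f : ℝ × ℝ → ℝ)
    (hmono : ∀ v w : ℝ × ℝ,
      Monotone (fun t : ℝ => f (w + t • v)) ∨ Antitone (fun t : ℝ => f (w + t • v)))
    (hnc : ¬ ∀ x y : ℝ × ℝ, f x = f y)
    (w w' v v' : ℝ × ℝ) (hv : v ≠ 0) (hv' : v' ≠ 0)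
    (h1 : ∀ t : ℝ, f (w + t • v) = f w)
    (h2 : ∀ t : ℝ, f (w' + t • v') = f w') :
    ∃ μ : ℝ, v = μ • v' := by
  by_contra hpar
  push_neg at hpar
  apply hnc
  have hd : v.1 * v'.2 - v.2 * v'.1 ≠ 0 := by
    intro h0
    rcases eq_or_ne v'.1 0 with h1' | h1'
    · have h2' : v'.2 ≠ 0 := by
        intro h2'
        exact hv' (Prod.ext h1' h2')
      refine hpar (v.2 / v'.2) (Prod.ext ?_ ?_)
      · simp only [Prod.smul_fst, smul_eq_mul, h1', mul_zero]
        have hz : v.1 * v'.2 = 0 := by rw [h1'] at h0; linarith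
        exact (mul_eq_zero.mp hz).resolve_right h2'
      · simp only [Prod.smul_snd, smul_eq_mul]
        field_simp
    · refine hpar (v.1 / v'.1) (Prod.ext ?_ ?_)
      · simp only [Prod.smul_fst, smul_eq_mul]
        field_simp
      · simp only [Prod.smul_snd, smul_eq_mul]
        field_simp
        nlinarith [h0]
  have hspan : ∀ u : ℝ × ℝ, ∃ s t : ℝ, u = s • v + t • v' := by
    intro u
    refine ⟨(u.1 * v'.2 - u.2 * v'.1) / (v.1 * v'.2 - v.2 * v'.1), (v.1 * u.2 - v.2 * u.1) / (v.1 * v'.2 - v.2 * v'.1), ?_⟩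
    refine Prod.ext ?_ ?_ <;>
      simp only [Prod.fst_add, Prod.snd_add, Prod.smul_fst, Prod.smul_snd, smul_eq_mul] <;>
      rw [div_mul_eq_mul_div, div_mul_eq_mul_div, ← add_div, eq_div_iff hd] <;> ring
  obtain ⟨a, b, hab⟩ := hspan (w' - w)
  have hq : w + a • v = w' + (-b) • v' := by
    have hw' : w' = w + a • v + b • v' := by
      have h := sub_eq_iff_eq_add.mp hab
      rw [h]; abel
    rw [hw']
    module
  have hc : f w' = f w := by
    have e1 : f (w + a • v) = f w := h1 a
    have e2 : f (w' + (-b) • v') = f w' := h2 (-b)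
    rw [← e2, ← hq, e1]
  have key : ∀ x : ℝ × ℝ, f x = f w := by
    intro x
    obtain ⟨s, t, hst⟩ := hspan (x - (w + a • v))
    set u : ℝ × ℝ := s • v - t • v' with hu
    have hx : x = w + a • v + s • v + t • v' := by
      have h := sub_eq_iff_eq_add.mp hst
      rw [h]; abel
    have hp1 : x + (1 : ℝ) • u = w + (a + 2 * s) • v := by
      rw [hx, hu]; module
    have hp2 : x + (-1 : ℝ) • u = w' + (-b + 2 * t) • v' := by
      have : x + (-1 : ℝ) • u = (w + a • v) + 2 • (t • v') := by
        rw [hx, hu]; module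
      rw [this, hq]
      module
    have e1 : f (x + (1 : ℝ) • u) = f w := by rw [hp1]; exact h1 _
    have e2 : f (x + (-1 : ℝ) • u) = f w := by rw [hp2, h2]; exact hc
    have e0 : f (x + (0 : ℝ) • u) = f x := by simp
    rcases hmono u x with hm | hm
    · have l1 := hm (show (-1 : ℝ) ≤ 0 by norm_num)
      have l2 := hm (show (0 : ℝ) ≤ 1 by norm_num)
      simp only at l1 l2
      rw [← e0]
      exact le_antisymm (e1 ▸ l2) (e2 ▸ l1)
    · have l1 := hm (show (-1 : ℝ) ≤ 0 by norm_num)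
      have l2 := hm (show (0 : ℝ) ≤ 1 by norm_num)
      simp only at l1 l2
      rw [← e0]
      exact le_antisymm (e2 ▸ l1) (e1 ▸ l2)
  intro x y
  rw [key x, key y]
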